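/- Assume k(1) = 0, i.e. λ + θ + λΦ′(1) = 0 (the case ĉ = 1 of the paper); then ζ(c) < 0 for all c ∈ [0,1), and both x̄₀(c) → −∞ and γ(c) → −∞ as c ↑ 1. -/

import Mathlib

open MeasureTheory Real Set Filter

/-- The (positive multiple of the) strictly increasing fundamental solution `ψ_λ` of the
Ornstein–Uhlenbeck equation `(1/2)σ² f'' + θ(μ - x) f' = λ f`, written as the integral
`ψ(x) = ∫₀^∞ t^(λ/θ - 1) exp(-t²/2 + a t (x - μ)) dt` with `a = √(2θ)/σ`. -/
noncomputable def OUpsi (lam th mu sig : ℝ) (x : ℝ) : ℝ :=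
  ∫ t in Set.Ioi (0:ℝ),
    t ^ (lam / th - 1) * Real.exp (-t ^ 2 / 2 + Real.sqrt (2 * th) / sig * t * (x - mu))

/-- `k(c) = λ + θ + λ Φ'(c)`. -/
noncomputable def kfun (lam th : ℝ) (Phi : ℝ → ℝ) (c : ℝ) : ℝ :=
  lam + th + lam * deriv Phi c

/-- `ζ(c) = (λ+θ)(1-c) - λΦ(c)`. -/
noncomputable def zetafun (lam th : ℝ) (Phi : ℝ → ℝ) (c : ℝ) : ℝ :=
  (lam + th) * (1 - c) - lam * Phi c

/-- `x̄₀(c) = θμΦ(c)/ζ(c)`. -/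
noncomputable def xbar0fun (lam th mu : ℝ) (Phi : ℝ → ℝ) (c : ℝ) : ℝ :=
  th * mu * Phi c / zetafun lam th Phi c


lemma Jaux_contOn (p b x : ℝ) :
    ContinuousOn (fun t : ℝ => t ^ p * Real.exp (-t ^ 2 / 2 + b * t * x)) (Ioi 0) := by
  refine ContinuousOn.mul ?_ (Continuous.continuousOn (by continuity))
  exact continuousOn_id.rpow_const fun t ht => Or.inl (ne_of_gt ht)

lemma Jaux_integrable {p : ℝ} (hp : -1 < p) (b x : ℝ) :
    IntegrableOn (fun t : ℝ => t ^ p * Real.exp (-t ^ 2 / 2 + b * t * x)) (Ioi 0) := by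
  have hint : IntegrableOn
      (fun t : ℝ => Real.exp ((b * x) ^ 2) * (t ^ p * Real.exp (-(4:ℝ)⁻¹ * t ^ 2))) (Ioi 0) :=
    (integrableOn_rpow_mul_exp_neg_mul_sq (by norm_num) hp).const_mul _
  refine hint.mono' ((Jaux_contOn p b x).aestronglyMeasurable measurableSet_Ioi) ?_
  filter_upwards [ae_restrict_mem measurableSet_Ioi] with t ht
  have ht0 : (0:ℝ) < t := ht
  have h1 : ‖t ^ p * Real.exp (-t ^ 2 / 2 + b * t * x)‖
      = t ^ p * Real.exp (-t ^ 2 / 2 + b * t * x) := by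
    rw [Real.norm_eq_abs, abs_of_nonneg (mul_nonneg (Real.rpow_nonneg ht0.le p) (Real.exp_pos _).le)]
  rw [h1]
  have h2 : Real.exp (-t ^ 2 / 2 + b * t * x)
      ≤ Real.exp ((b * x) ^ 2) * Real.exp (-(4:ℝ)⁻¹ * t ^ 2) := by
    rw [← Real.exp_add]
    apply Real.exp_le_exp.mpr
    nlinarith [sq_nonneg (t / 2 - b * x)]
  calc t ^ p * Real.exp (-t ^ 2 / 2 + b * t * x)
      ≤ t ^ p * (Real.exp ((b * x) ^ 2) * Real.exp (-(4:ℝ)⁻¹ * t ^ 2)) := by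
        exact mul_le_mul_of_nonneg_left h2 (Real.rpow_nonneg ht0.le p)
    _ = Real.exp ((b * x) ^ 2) * (t ^ p * Real.exp (-(4:ℝ)⁻¹ * t ^ 2)) := by ring

lemma Jaux_pos {p : ℝ} (hp : -1 < p) (b x : ℝ) :
    0 < ∫ t in Ioi (0:ℝ), t ^ p * Real.exp (-t ^ 2 / 2 + b * t * x) := by
  rw [setIntegral_pos_iff_support_of_nonneg_ae ?_ (Jaux_integrable hp b x)]
  · refine lt_of_lt_of_le ?_ (measure_mono (s := Ioi (0:ℝ)) ?_)
    · simp [Real.volume_Ioi]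
    · intro t ht
      refine ⟨?_, ht⟩
      have ht0 : (0:ℝ) < t := ht
      exact ne_of_gt (mul_pos (Real.rpow_pos_of_pos ht0 p) (Real.exp_pos _))
  · filter_upwards [ae_restrict_mem measurableSet_Ioi] with t ht
    have ht0 : (0:ℝ) < t := ht
    exact (mul_pos (Real.rpow_pos_of_pos ht0 p) (Real.exp_pos _)).le

lemma Jaux_hasDerivAt {p : ℝ} (hp : -1 < p) (b x₀ : ℝ) :
    HasDerivAt (fun x => ∫ t in Ioi (0:ℝ), t ^ p * Real.exp (-t ^ 2 / 2 + b * t * x))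
      (b * ∫ t in Ioi (0:ℝ), t ^ (p + 1) * Real.exp (-t ^ 2 / 2 + b * t * x₀)) x₀ := by
  have key := hasDerivAt_integral_of_dominated_loc_of_deriv_le
    (μ := volume.restrict (Ioi (0:ℝ))) (x₀ := x₀)
    (F := fun x t => t ^ p * Real.exp (-t ^ 2 / 2 + b * t * x))
    (F' := fun x t => t ^ p * (Real.exp (-t ^ 2 / 2 + b * t * x) * (b * t)))
    (bound := fun t => |b| * (t ^ (p + 1) * Real.exp (-t ^ 2 / 2 + (|b| * (|x₀| + 1)) * t * 1)))
    (Metric.ball_mem_nhds x₀ one_pos)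
    (Eventually.of_forall fun x => (Jaux_integrable hp b x).aestronglyMeasurable)
    (Jaux_integrable hp b x₀)
    ?_ ?_ ?_ ?_
  · obtain ⟨-, hd⟩ := key
    have heq : (∫ t in Ioi (0:ℝ), t ^ p * (Real.exp (-t ^ 2 / 2 + b * t * x₀) * (b * t)))
        = b * ∫ t in Ioi (0:ℝ), t ^ (p + 1) * Real.exp (-t ^ 2 / 2 + b * t * x₀) := by
      rw [← MeasureTheory.integral_const_mul]
      refine setIntegral_congr_fun measurableSet_Ioi fun t ht => ?_
      rw [Real.rpow_add_one (ne_of_gt (show (0:ℝ) < t from ht))]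
      ring
    rwa [heq] at hd
  · -- measurability of F' x₀
    refine AEStronglyMeasurable.congr
      (((Jaux_integrable (by linarith : (-1:ℝ) < p + 1) b x₀).const_mul b).aestronglyMeasurable) ?_
    filter_upwards [ae_restrict_mem measurableSet_Ioi] with t ht
    rw [Real.rpow_add_one (ne_of_gt (show (0:ℝ) < t from ht))]
    ring
  · -- bound
    filter_upwards [ae_restrict_mem measurableSet_Ioi] with t ht x hx
    have ht0 : (0:ℝ) < t := ht
    have hxb : |x| ≤ |x₀| + 1 := by
      have := mem_ball_iff_norm.mp hx
      rw [Real.norm_eq_abs] at this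
      calc |x| = |x₀ + (x - x₀)| := by ring_nf
        _ ≤ |x₀| + |x - x₀| := abs_add_le _ _
        _ ≤ |x₀| + 1 := by linarith
    have hE : Real.exp (-t ^ 2 / 2 + b * t * x)
        ≤ Real.exp (-t ^ 2 / 2 + (|b| * (|x₀| + 1)) * t * 1) := by
      apply Real.exp_le_exp.mpr
      have h1 : b * x ≤ |b| * (|x₀| + 1) := by
        calc b * x ≤ |b * x| := le_abs_self _
          _ = |b| * |x| := abs_mul _ _
          _ ≤ |b| * (|x₀| + 1) := by
              exact mul_le_mul_of_nonneg_left hxb (abs_nonneg b)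
      nlinarith [mul_le_mul_of_nonneg_right h1 ht0.le]
    have hnorm : ‖t ^ p * (Real.exp (-t ^ 2 / 2 + b * t * x) * (b * t))‖
        = t ^ p * (Real.exp (-t ^ 2 / 2 + b * t * x) * (|b| * t)) := by
      rw [Real.norm_eq_abs, abs_mul, abs_mul, abs_mul,
        abs_of_nonneg (Real.rpow_nonneg ht0.le p), abs_of_pos (Real.exp_pos _),
        abs_of_pos ht0]
    rw [hnorm, Real.rpow_add_one (ne_of_gt ht0)]
    calc t ^ p * (Real.exp (-t ^ 2 / 2 + b * t * x) * (|b| * t))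
        ≤ t ^ p * (Real.exp (-t ^ 2 / 2 + (|b| * (|x₀| + 1)) * t * 1) * (|b| * t)) := by
          have := mul_le_mul_of_nonneg_right hE (mul_nonneg (abs_nonneg b) ht0.le)
          exact mul_le_mul_of_nonneg_left this (Real.rpow_nonneg ht0.le p)
      _ = |b| * (t ^ p * t * Real.exp (-t ^ 2 / 2 + (|b| * (|x₀| + 1)) * t * 1)) := by ring
  · exact (Jaux_integrable (by linarith : (-1:ℝ) < p + 1) (|b| * (|x₀| + 1)) 1).const_mul _
  · -- differentiability
    filter_upwards [ae_restrict_mem measurableSet_Ioi] with t ht x hx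
    have h1 : HasDerivAt (fun x : ℝ => -t ^ 2 / 2 + b * t * x) (b * t) x := by
      simpa using ((hasDerivAt_id x).const_mul (b * t)).const_add (-t ^ 2 / 2)
    exact h1.exp.const_mul (t ^ p)

/-- the case `ĉ = 1`: assume `k(1) = 0`, i.e. `λ + θ + λΦ'(1) = 0`.
Then `ζ(c) < 0` for every `c ∈ [0,1)`, and both `x̄₀(c) → -∞` and `γ(c) → -∞` as `c ↑ 1`,
where `γ(c)` denotes the unique real solution of `ψ(x) = ψ'(x)(x - x̄₀(c))`, lying in
`(x̄₀(c), ∞)`. -/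
theorem statement18 (lam th mu sig : ℝ)
    (hlam : 0 < lam) (hth : 0 < th) (hmu : 0 < mu) (hsig : 0 < sig)
    (Phi : ℝ → ℝ) (hPhiC2 : ContDiff ℝ 2 Phi)
    (hPhiconv : StrictConvexOn ℝ Set.univ Phi)
    (hPhi' : ∀ c ∈ Set.Icc (0:ℝ) 1, deriv Phi c < 0) (hPhi1 : Phi 1 = 0)
    (hk1 : lam + th + lam * deriv Phi 1 = 0)
    (gamma : ℝ → ℝ)
    (hgamma : ∀ c ∈ Set.Ico (0:ℝ) 1,
      OUpsi lam th mu sig (gamma c)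
        = deriv (OUpsi lam th mu sig) (gamma c) * (gamma c - xbar0fun lam th mu Phi c) ∧
      xbar0fun lam th mu Phi c < gamma c ∧
      ∀ y : ℝ, OUpsi lam th mu sig y
        = deriv (OUpsi lam th mu sig) y * (y - xbar0fun lam th mu Phi c) → y = gamma c)
    :
    (∀ c ∈ Set.Ico (0:ℝ) 1, zetafun lam th Phi c < 0) ∧
    Filter.Tendsto (xbar0fun lam th mu Phi) (nhdsWithin 1 (Set.Iio 1)) Filter.atBot ∧
    Filter.Tendsto gamma (nhdsWithin 1 (Set.Iio 1)) Filter.atBot := by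
  have hlamth : 0 < lam + th := by linarith
  have hd1 : DifferentiableAt ℝ Phi 1 :=
    (hPhiC2.differentiable (by norm_num)).differentiableAt
  have hderiv1 : deriv Phi 1 = -((lam + th) / lam) := by
    field_simp
    linarith
  have hslope : ∀ c : ℝ, c < 1 → (Phi 1 - Phi c) / (1 - c) < deriv Phi 1 := by
    intro c hc
    have := hPhiconv.slope_lt_deriv (mem_univ c) (mem_univ 1) hc hd1
    rwa [slope_def_field] at this
  have hratio : 0 < (lam + th) / lam := div_pos hlamth hlam
  have hPhipos : ∀ c : ℝ, c < 1 → 0 < Phi c := by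
    intro c hc
    have h := hslope c hc
    rw [hPhi1, hderiv1] at h
    have h1c : (0:ℝ) < 1 - c := by linarith
    rw [div_lt_iff₀ h1c] at h
    nlinarith
  have hzneg : ∀ c : ℝ, c < 1 → zetafun lam th Phi c < 0 := by
    intro c hc
    have h := hslope c hc
    rw [hPhi1, hderiv1] at h
    have h1c : (0:ℝ) < 1 - c := by linarith
    rw [div_lt_iff₀ h1c] at h
    have h2 := mul_lt_mul_of_pos_left h hlam
    have h3 : lam * (-((lam + th) / lam) * (1 - c)) = -((lam + th) * (1 - c)) := by
      field_simp
    unfold zetafun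
    nlinarith
  have part1 : ∀ c ∈ Set.Ico (0:ℝ) 1, zetafun lam th Phi c < 0 := fun c hc => hzneg c hc.2
  -- Part 2
  set hfun : ℝ → ℝ := fun c => lam + (lam + th) * (slope Phi 1 c)⁻¹ with hhfun
  have hIco : ∀ᶠ c in nhdsWithin 1 (Set.Iio 1), c ∈ Set.Ico (0:ℝ) 1 :=
    mem_of_superset (Ioo_mem_nhdsLT_of_mem (by norm_num : (1:ℝ) ∈ Ioc 0 1)) Ioo_subset_Ico_self
  have hlt1 : ∀ᶠ c in nhdsWithin (1:ℝ) (Set.Iio 1), c < (1:ℝ) :=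
    eventually_mem_nhdsWithin
  have hkey : ∀ c : ℝ, c < 1 →
      hfun c = -(zetafun lam th Phi c) / Phi c ∧
      xbar0fun lam th mu Phi c = -(th * mu * (hfun c)⁻¹) := by
    intro c hc
    have hP : 0 < Phi c := hPhipos c hc
    have hZ : zetafun lam th Phi c < 0 := hzneg c hc
    have hPne : Phi c ≠ 0 := ne_of_gt hP
    have hZne : zetafun lam th Phi c ≠ 0 := ne_of_lt hZ
    have hc1 : c - 1 ≠ 0 := sub_ne_zero.mpr (ne_of_lt hc)
    have h1 : hfun c = -(zetafun lam th Phi c) / Phi c := by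
      rw [hhfun]
      simp only [slope_def_field, hPhi1]
      unfold zetafun
      field_simp
      ring
    refine ⟨h1, ?_⟩
    rw [h1]
    unfold xbar0fun
    rw [neg_div, inv_neg, inv_div]
    ring
  have hTslope : Tendsto (slope Phi 1) (nhdsWithin 1 (Set.Iio 1)) (nhds (deriv Phi 1)) :=
    (hasDerivAt_iff_tendsto_slope.mp hd1.hasDerivAt).mono_left
      (nhdsWithin_mono 1 fun y hy => ne_of_lt hy)
  have hd1ne : deriv Phi 1 ≠ 0 := by
    rw [hderiv1]; exact ne_of_lt (by linarith)
  have hTh : Tendsto hfun (nhdsWithin 1 (Set.Iio 1)) (nhds 0) := by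
    have h0 : Tendsto (fun c => lam + (lam + th) * (slope Phi 1 c)⁻¹)
        (nhdsWithin 1 (Set.Iio 1)) (nhds (lam + (lam + th) * (deriv Phi 1)⁻¹)) :=
      Tendsto.const_add _ (Tendsto.const_mul _ (hTslope.inv₀ hd1ne))
    have hval : lam + (lam + th) * (deriv Phi 1)⁻¹ = 0 := by
      rw [hderiv1]
      have hne : (-th) + (-lam) ≠ 0 := by linarith
      field_simp
      ring
    rwa [hval] at h0
  have hTh' : Tendsto hfun (nhdsWithin 1 (Set.Iio 1)) (nhdsWithin 0 (Set.Ioi 0)) := by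
    rw [tendsto_nhdsWithin_iff]
    refine ⟨hTh, ?_⟩
    filter_upwards [hlt1] with c hc
    have hP := hPhipos c hc
    have hZ := hzneg c hc
    rw [(hkey c hc).1]
    exact div_pos (neg_pos.mpr hZ) hP
  have hinv : Tendsto (fun c => (hfun c)⁻¹) (nhdsWithin 1 (Set.Iio 1)) atTop :=
    hTh'.inv_tendsto_nhdsGT_zero
  have hmul : Tendsto (fun c => th * mu * (hfun c)⁻¹) (nhdsWithin 1 (Set.Iio 1)) atTop :=
    hinv.const_mul_atTop (by positivity)
  have part2 : Tendsto (xbar0fun lam th mu Phi) (nhdsWithin 1 (Set.Iio 1)) atBot := by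
    have hneg : Tendsto (fun c => -(th * mu * (hfun c)⁻¹)) (nhdsWithin 1 (Set.Iio 1)) atBot :=
      tendsto_neg_atTop_atBot.comp hmul
    refine hneg.congr' ?_
    filter_upwards [hlt1] with c hc
    exact ((hkey c hc).2).symm
  refine ⟨part1, part2, ?_⟩
  -- Part 3
  set b : ℝ := Real.sqrt (2 * th) / sig with hb
  have hbpos : 0 < b := div_pos (Real.sqrt_pos.mpr (by linarith)) hsig
  have hp : (-1:ℝ) < lam / th - 1 := by
    have : 0 < lam / th := div_pos hlam hth
    linarith
  have hp' : (-1:ℝ) < lam / th := by linarith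
  have hp1 : lam / th - 1 + 1 = lam / th := by ring
  set ψ := OUpsi lam th mu sig with hψ
  set D : ℝ → ℝ := fun x => b * ∫ t in Ioi (0:ℝ),
      t ^ (lam / th) * Real.exp (-t ^ 2 / 2 + b * t * (x - mu)) with hD
  have hψd : ∀ x, HasDerivAt ψ (D x) x := by
    intro x
    have h1 := Jaux_hasDerivAt hp b (x - mu)
    rw [hp1] at h1
    have h2 := h1.comp x ((hasDerivAt_id x).sub_const mu)
    simp only [Function.comp_def, id, mul_one] at h2
    exact h2
  have hψdiff : Differentiable ℝ ψ := fun x => (hψd x).differentiableAt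
  have hderiv_eq : deriv ψ = D := funext fun x => (hψd x).deriv
  have hψpos : ∀ x, 0 < ψ x := by
    intro x
    rw [hψ]
    unfold OUpsi
    rw [← hb]
    exact Jaux_pos hp b (x - mu)
  have hDpos : ∀ x, 0 < D x := fun x => mul_pos hbpos (Jaux_pos hp' b (x - mu))
  have hJ2cont : Continuous (fun y => ∫ t in Ioi (0:ℝ),
      t ^ (lam / th) * Real.exp (-t ^ 2 / 2 + b * t * y)) := by
    have hdiff : Differentiable ℝ (fun y => ∫ t in Ioi (0:ℝ),
        t ^ (lam / th) * Real.exp (-t ^ 2 / 2 + b * t * y)) :=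
      fun y => (Jaux_hasDerivAt hp' b y).differentiableAt
    exact hdiff.continuous
  have hDcont : Continuous D :=
    continuous_const.mul (hJ2cont.comp (continuous_id.sub continuous_const))
  rw [tendsto_atBot]
  intro M
  have hKev : ∀ᶠ c in nhdsWithin (1:ℝ) (Set.Iio 1),
      xbar0fun lam th mu Phi c ≤ min M (M - ψ M / D M) := part2.eventually_le_atBot _
  filter_upwards [hKev, hIco] with c hcK hcI
  set x0 := xbar0fun lam th mu Phi c with hx0
  have hx0M : x0 ≤ M := le_trans hcK (min_le_left _ _)
  have hx0K : x0 ≤ M - ψ M / D M := le_trans hcK (min_le_right _ _)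
  have hFcont : ContinuousOn (fun x => ψ x - D x * (x - x0)) (Icc x0 M) :=
    (hψdiff.continuous.sub (hDcont.mul (continuous_id.sub continuous_const))).continuousOn
  have hFM : ψ M - D M * (M - x0) ≤ 0 := by
    have h1 : ψ M / D M ≤ M - x0 := by linarith
    have h2 := mul_le_mul_of_nonneg_left h1 (hDpos M).le
    have h3 : D M * (ψ M / D M) = ψ M := by
      field_simp [(hDpos M).ne']
    linarith
  have h0mem : (0:ℝ) ∈ Icc (ψ M - D M * (M - x0)) (ψ x0 - D x0 * (x0 - x0)) := by
    refine ⟨hFM, ?_⟩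
    simp only [sub_self, mul_zero, sub_zero]
    exact (hψpos x0).le
  obtain ⟨y, hyIcc, hFy⟩ := intermediate_value_Icc' hx0M hFcont h0mem
  have hFy' : ψ y - D y * (y - x0) = 0 := hFy
  have heq : ψ y = deriv ψ y * (y - x0) := by
    rw [hderiv_eq]
    linarith
  have hy := (hgamma c hcI).2.2 y heq
  rw [← hy]
  exact hyIcc.2
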